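/- There exists a heteroclinic orbit of F connecting the repeller (0,0) to the saddle (π,0): there exists a sequence X : ℤ → ℝ² with X(n+1) = F(X(n)) for all n ∈ ℤ, X(n) ≠ (0,0) and X(n) ≠ (π,0) for all n, X(n) → (π,0) as n → +∞, and X(n) → (0,0) as n → −∞. -/

import Mathlib

open Real Filter

noncomputable def F (a : ℝ) : ℝ × ℝ → ℝ × ℝ :=
  fun p => (p.1 + 2 * a * Real.sin p.1 + a * Real.sin p.2,
            p.2 + a * Real.sin p.1 + 2 * a * Real.sin p.2)

namespace Het

noncomputable def G (a : ℝ) : ℝ × ℝ → ℝ × ℝ :=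
  fun w => (w.1 + 2 * a * (Real.cos (w.2 / 2) * Real.sin (w.1 / 2)),
            w.2 + 6 * a * (Real.sin (w.2 / 2) * Real.cos (w.1 / 2)))

noncomputable def toXY (w : ℝ × ℝ) : ℝ × ℝ := ((w.1 + w.2) / 2, (w.2 - w.1) / 2)

lemma continuous_G (a : ℝ) : Continuous (G a) := by
  unfold G; fun_prop

lemma conj (a : ℝ) (w : ℝ × ℝ) : F a (toXY w) = toXY (G a w) := by
  obtain ⟨u, v⟩ := w
  have h1 : (u + v) / 2 = u / 2 + v / 2 := by ring
  have h2 : (v - u) / 2 = v / 2 - u / 2 := by ring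
  simp only [F, G, toXY, h1, h2, Real.sin_add, Real.sin_sub, Prod.mk.injEq]
  constructor <;> ring

/-! ### Forward dynamics in (u,v) coordinates -/

noncomputable def P (s : ℝ) : ℝ × ℝ := ((1 - s) / 4, s / 4)

noncomputable def W (a : ℝ) (n : ℕ) (s : ℝ) : ℝ × ℝ := (G a)^[n] (P s)

lemma W_zero (a : ℝ) (s : ℝ) : W a 0 s = P s := rfl

lemma W_succ (a : ℝ) (n : ℕ) (s : ℝ) : W a (n + 1) s = G a (W a n s) :=
  Function.iterate_succ_apply' _ _ _

lemma continuous_W (a : ℝ) (n : ℕ) : Continuous (fun s => W a n s) := by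
  induction n with
  | zero =>
      have : Continuous P := by unfold P; fun_prop
      simpa [W] using this
  | succ n ih =>
      have : Continuous fun s => G a (W a n s) := (continuous_G a).comp ih
      simpa [W_succ] using this

lemma cos_half_le {v : ℝ} (hv : 0 ≤ v) (hvpi : v ≤ π) : Real.cos (v / 2) ≤ (π - v) / 2 := by
  have h := Real.sin_pi_div_two_sub (v / 2)
  have := Real.sin_le (x := π / 2 - v / 2) (by linarith)
  rw [h] at this
  linarith

/-- sin Lipschitz. -/
lemma sin_lip (x y : ℝ) : |Real.sin x - Real.sin y| ≤ |x - y| := by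
  rw [Real.sin_sub_sin]
  have h1 : |Real.sin ((x - y) / 2)| ≤ |(x - y) / 2| := Real.abs_sin_le_abs
  have h2 : |Real.cos ((x + y) / 2)| ≤ 1 := Real.abs_cos_le_one _
  calc |2 * Real.sin ((x - y) / 2) * Real.cos ((x + y) / 2)|
      = 2 * |Real.sin ((x - y) / 2)| * |Real.cos ((x + y) / 2)| := by
        rw [abs_mul, abs_mul]; simp [abs_of_nonneg]
    _ ≤ 2 * |(x - y) / 2| * 1 := by
        apply mul_le_mul _ h2 (abs_nonneg _) (by positivity)
        exact mul_le_mul_of_nonneg_left h1 (by norm_num)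
    _ = |x - y| := by rw [abs_div]; simp; ring

section Step

/-- One-step estimates inside the open square. -/
lemma step_pos1 {a : ℝ} (ha : 0 < a) {u v : ℝ} (hu0 : 0 < u) (hupi : u < π) (hv0 : 0 < v) (hvpi : v < π) :
    0 < 2 * a * (Real.cos (v / 2) * Real.sin (u / 2)) := by
  have hc : 0 < Real.cos (v / 2) :=
    Real.cos_pos_of_mem_Ioo ⟨by linarith [Real.pi_pos], by linarith⟩
  have hs : 0 < Real.sin (u / 2) :=
    Real.sin_pos_of_pos_of_lt_pi (by linarith) (by linarith [Real.pi_pos])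
  positivity

lemma step_pos2 {a : ℝ} (ha : 0 < a) {u v : ℝ} (hu0 : 0 < u) (hupi : u < π)
    (hv0 : 0 < v) (hvpi : v < π) :
    0 < 6 * a * (Real.sin (v / 2) * Real.cos (u / 2)) := by
  have hc : 0 < Real.cos (u / 2) :=
    Real.cos_pos_of_mem_Ioo ⟨by linarith [Real.pi_pos], by linarith⟩
  have hs : 0 < Real.sin (v / 2) :=
    Real.sin_pos_of_pos_of_lt_pi (by linarith) (by linarith [Real.pi_pos])
  positivity

lemma step_le1 {a : ℝ} (ha : 0 < a) {u v : ℝ} (hv0 : 0 ≤ v) (hvpi : v ≤ π) :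
    2 * a * (Real.cos (v / 2) * Real.sin (u / 2)) ≤ a * (π - v) := by
  have hc : Real.cos (v / 2) ≤ (π - v) / 2 := cos_half_le hv0 hvpi
  have hc0 : (0:ℝ) ≤ Real.cos (v / 2) :=
    Real.cos_nonneg_of_mem_Icc ⟨by linarith [Real.pi_pos], by linarith⟩
  have hs : Real.sin (u / 2) ≤ 1 := Real.sin_le_one _
  have hs0 : Real.cos (v / 2) * Real.sin (u / 2) ≤ Real.cos (v / 2) * 1 := by
    rcases le_or_gt (Real.sin (u/2)) 1 with h | h
    · nlinarith [Real.neg_one_le_sin (u/2)]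
    · linarith [Real.sin_le_one (u/2)]
  nlinarith

lemma step_le2 {a : ℝ} (ha : 0 < a) {u v : ℝ} (hu0 : 0 ≤ u) (hupi : u ≤ π) :
    6 * a * (Real.sin (v / 2) * Real.cos (u / 2)) ≤ 3 * a * (π - u) := by
  have hc : Real.cos (u / 2) ≤ (π - u) / 2 := cos_half_le hu0 hupi
  have hc0 : (0:ℝ) ≤ Real.cos (u / 2) :=
    Real.cos_nonneg_of_mem_Icc ⟨by linarith [Real.pi_pos], by linarith⟩
  have hs : Real.sin (v / 2) ≤ 1 := Real.sin_le_one _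
  have : Real.sin (v / 2) * Real.cos (u / 2) ≤ 1 * Real.cos (u / 2) := by
    nlinarith [Real.neg_one_le_sin (v/2)]
  nlinarith

end Step

/-! ### The shooting sets -/

def A (a : ℝ) : Set ℝ := {s | ∃ n, π < (W a n s).1 ∧ ∀ m ≤ n, (W a m s).2 < π}

def B (a : ℝ) : Set ℝ := {s | ∃ n, π < (W a n s).2 ∧ ∀ m ≤ n, (W a m s).1 < π}

lemma isOpen_aux (a : ℝ) (f : ℝ × ℝ → ℝ) (hf : Continuous f) (g : ℝ × ℝ → ℝ)
    (hg : Continuous g) :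
    IsOpen {s | ∃ n, π < f (W a n s) ∧ ∀ m ≤ n, g (W a m s) < π} := by
  have : {s | ∃ n, π < f (W a n s) ∧ ∀ m ≤ n, g (W a m s) < π}
      = ⋃ n, ({s | π < f (W a n s)} ∩ ⋂ m : Fin (n+1), {s | g (W a (m : ℕ) s) < π}) := by
    ext s
    simp only [Set.mem_setOf_eq, Set.mem_iUnion, Set.mem_inter_iff, Set.mem_iInter]
    constructor
    · rintro ⟨n, h1, h2⟩
      exact ⟨n, h1, fun m => h2 m (Nat.lt_succ_iff.mp m.isLt)⟩
    · rintro ⟨n, h1, h2⟩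
      exact ⟨n, h1, fun m hm => h2 ⟨m, Nat.lt_succ_iff.mpr hm⟩⟩
  rw [this]
  apply isOpen_iUnion
  intro n
  apply IsOpen.inter
  · exact isOpen_lt continuous_const (hf.comp (continuous_W a n))
  · exact isOpen_iInter_of_finite fun m =>
      isOpen_lt ((hg.comp (continuous_W a m)).comp continuous_id) continuous_const

lemma isOpen_A (a : ℝ) : IsOpen (A a) :=
  isOpen_aux a _ continuous_fst _ continuous_snd

lemma isOpen_B (a : ℝ) : IsOpen (B a) :=
  isOpen_aux a _ continuous_snd _ continuous_fst

lemma disjoint_AB (a : ℝ) : ∀ s, s ∈ A a → s ∈ B a → False := by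
  rintro s ⟨n, hn1, hn2⟩ ⟨k, hk1, hk2⟩
  rcases le_total n k with h | h
  · exact absurd hn1 (not_lt.mpr (hk2 n h).le)
  · exact absurd hk1 (not_lt.mpr (hn2 k h).le)

/-- A monotone recursion `w ↦ w + c sin(w/2)` starting at 1/4 eventually exceeds π. -/
lemma escape {c : ℝ} (hc : 0 < c) (w : ℕ → ℝ) (h0 : w 0 = 1/4)
    (hrec : ∀ n, w (n+1) = w n + c * Real.sin (w n / 2)) : ∃ n, π < w n := by
  by_contra hall
  push_neg at hall
  have key : ∀ n, 1/4 ≤ w n ∧ 1/4 + n * (c / (4 * π)) ≤ w n := by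
    intro n
    induction n with
    | zero => simp [h0]
    | succ n ih =>
        obtain ⟨ih1, ih2⟩ := ih
        have hwn : w n ≤ π := hall n
        have hsin : w n / π ≤ Real.sin (w n / 2) := by
          have habs : |w n / 2| ≤ π / 2 := by
            rw [abs_of_nonneg (by linarith)]; linarith
          have := Real.mul_abs_le_abs_sin habs
          rw [abs_of_nonneg (by linarith : (0:ℝ) ≤ w n / 2)] at this
          have hspos : 0 < Real.sin (w n / 2) :=
            Real.sin_pos_of_pos_of_lt_pi (by linarith) (by linarith [Real.pi_pos])
          rw [abs_of_nonneg hspos.le] at this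
          have hpi : (0:ℝ) < π := Real.pi_pos
          calc w n / π = 2 / π * (w n / 2) := by field_simp
            _ ≤ Real.sin (w n / 2) := this
        have hpi : (0:ℝ) < π := Real.pi_pos
        have hlow : 1 / (4 * π) ≤ w n / π := by
          rw [div_le_div_iff₀ (by positivity) hpi]; nlinarith
        have hstep : c / (4 * π) ≤ c * Real.sin (w n / 2) := by
          have h1 : 1 / (4 * π) ≤ Real.sin (w n / 2) := le_trans hlow hsin
          have := mul_le_mul_of_nonneg_left h1 hc.le
          calc c / (4 * π) ≤ c * (1 / (4 * π)) := le_of_eq (by ring)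
            _ ≤ c * Real.sin (w n / 2) := this
        constructor
        · have : 0 < c * Real.sin (w n / 2) := by
            have : 0 < c / (4 * π) := by positivity
            linarith
          rw [hrec]; linarith
        · rw [hrec]; push_cast; nlinarith
  obtain ⟨n, hn⟩ := exists_nat_gt (π / (c / (4 * π)))
  have h1 : π < n * (c / (4 * π)) := by
    have hd : 0 < c / (4 * π) := by positivity
    rw [div_lt_iff₀ hd] at hn
    linarith
  have := (key n).2
  linarith [hall n]

lemma zero_mem_A {a : ℝ} (ha : 0 < a) : (0:ℝ) ∈ A a := by
  have hsnd : ∀ n, (W a n 0).2 = 0 := by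
    intro n
    induction n with
    | zero => simp [W_zero, P]
    | succ n ih => rw [W_succ]; simp [G, ih]
  have hrec : ∀ n, (W a (n+1) 0).1 = (W a n 0).1 + 2 * a * Real.sin ((W a n 0).1 / 2) := by
    intro n
    rw [W_succ]
    simp [G, hsnd n]
  have h0 : (W a 0 0).1 = 1/4 := by norm_num [W_zero, P]
  obtain ⟨n, hn⟩ := escape (by linarith : (0:ℝ) < 2 * a) (fun n => (W a n 0).1) h0 hrec
  exact ⟨n, hn, fun m _ => by rw [hsnd m]; exact Real.pi_pos⟩

lemma one_mem_B {a : ℝ} (ha : 0 < a) : (1:ℝ) ∈ B a := by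
  have hfst : ∀ n, (W a n 1).1 = 0 := by
    intro n
    induction n with
    | zero => simp [W_zero, P]
    | succ n ih => rw [W_succ]; simp [G, ih]
  have hrec : ∀ n, (W a (n+1) 1).2 = (W a n 1).2 + 6 * a * Real.sin ((W a n 1).2 / 2) := by
    intro n
    rw [W_succ]
    simp [G, hfst n]
  have h0 : (W a 0 1).2 = 1/4 := by norm_num [W_zero, P]
  obtain ⟨n, hn⟩ := escape (by linarith : (0:ℝ) < 6 * a) (fun n => (W a n 1).2) h0 hrec
  exact ⟨n, hn, fun m _ => by rw [hfst m]; exact Real.pi_pos⟩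

lemma main_inv {a : ℝ} (ha : 0 < a) (ha6 : a < 1/6) {s : ℝ}
    (hs0 : 0 < s) (hs1 : s < 1) (hA : s ∉ A a) (hB : s ∉ B a) :
    ∀ n, ∀ m ≤ n, 0 < (W a m s).1 ∧ (W a m s).1 < π ∧ 0 < (W a m s).2 ∧ (W a m s).2 < π := by
  intro n
  induction n with
  | zero =>
      intro m hm
      interval_cases m
      have hpi : (3:ℝ) < π := Real.pi_gt_three
      constructor
      · show 0 < (P s).1; simp only [P]; linarith
      constructor
      · show (P s).1 < π; simp only [P]; linarith
      constructor
      · show 0 < (P s).2; simp only [P]; linarith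
      · show (P s).2 < π; simp only [P]; linarith
  | succ n ih =>
      intro m hm
      rcases Nat.lt_succ_iff_lt_or_eq.mp (Nat.lt_succ_of_le hm) with hlt | heq
      · exact ih m (Nat.lt_succ_iff.mp hlt)
      · subst heq
        obtain ⟨hu0, hupi, hv0, hvpi⟩ := ih n le_rfl
        have hW : W a (n+1) s = G a (W a n s) := W_succ a n s
        set u := (W a n s).1 with hu
        set v := (W a n s).2 with hv
        have hWu : (W a (n+1) s).1 = u + 2*a*(Real.cos (v/2) * Real.sin (u/2)) := by
          rw [hW]; simp only [G]; rfl
        have hWv : (W a (n+1) s).2 = v + 6*a*(Real.sin (v/2) * Real.cos (u/2)) := by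
          rw [hW]; simp only [G]; rfl
        have hdu : 0 < 2*a*(Real.cos (v/2) * Real.sin (u/2)) :=
          step_pos1 ha hu0 hupi hv0 hvpi
        have hdv : 0 < 6*a*(Real.sin (v/2) * Real.cos (u/2)) :=
          step_pos2 ha hu0 hupi hv0 hvpi
        have hbu : 2*a*(Real.cos (v/2) * Real.sin (u/2)) ≤ a * (π - v) :=
          step_le1 ha hv0.le hvpi.le
        have hbv : 6*a*(Real.sin (v/2) * Real.cos (u/2)) ≤ 3*a*(π - u) :=
          step_le2 ha hu0.le hupi.le
        have hkey : (W a (n+1) s).1 < π ∧ (W a (n+1) s).2 < π := by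
          by_contra hcon
          rw [not_and_or, not_lt, not_lt] at hcon
          rcases hcon with hU | hV
          · rcases le_or_gt π (W a (n+1) s).2 with hV | hV
            · -- both ≥ π : numeric contradiction
              have e1 : π - u ≤ a * (π - v) := by rw [hWu] at hU; linarith
              have e2 : π - v ≤ 3*a*(π - u) := by rw [hWv] at hV; linarith
              have e3 := mul_le_mul_of_nonneg_left e2 ha.le
              nlinarith [sq_nonneg a]
            · rcases eq_or_lt_of_le hU with hEq | hGt
              · -- first coordinate hits π exactly : advance one more step
                have hW2 : W a (n+2) s = G a (W a (n+1) s) := W_succ a (n+1) s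
                have hV'0 : 0 < (W a (n+1) s).2 := by rw [hWv]; linarith
                have hc : 0 < Real.cos ((W a (n+1) s).2 / 2) :=
                  Real.cos_pos_of_mem_Ioo ⟨by linarith [Real.pi_pos], by linarith⟩
                have h2u : (W a (n+2) s).1 = π + 2*a*Real.cos ((W a (n+1) s).2/2) := by
                  rw [hW2]; simp only [G]
                  rw [← hEq, Real.sin_pi_div_two]; ring
                have h2v : (W a (n+2) s).2 = (W a (n+1) s).2 := by
                  rw [hW2]; simp only [G]
                  rw [← hEq, Real.cos_pi_div_two]; ring
                apply hA
                refine ⟨n+2, by rw [h2u]; nlinarith, fun m hm' => ?_⟩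
                by_cases hm2 : m ≤ n
                · exact (ih m hm2).2.2.2
                · have : m = n+1 ∨ m = n+2 := by omega
                  rcases this with h' | h'
                  · rw [h']; exact hV
                  · rw [h', h2v]; exact hV
              · apply hA
                refine ⟨n+1, hGt, fun m hm' => ?_⟩
                by_cases hm2 : m ≤ n
                · exact (ih m hm2).2.2.2
                · have : m = n+1 := by omega
                  rw [this]; exact hV
          · rcases le_or_gt π (W a (n+1) s).1 with hU | hU
            · have e1 : π - u ≤ a * (π - v) := by rw [hWu] at hU; linarith
              have e2 : π - v ≤ 3*a*(π - u) := by rw [hWv] at hV; linarith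
              have e3 := mul_le_mul_of_nonneg_left e2 ha.le
              nlinarith [sq_nonneg a]
            · rcases eq_or_lt_of_le hV with hEq | hGt
              · have hW2 : W a (n+2) s = G a (W a (n+1) s) := W_succ a (n+1) s
                have hU'0 : 0 < (W a (n+1) s).1 := by rw [hWu]; linarith
                have hc : 0 < Real.cos ((W a (n+1) s).1 / 2) :=
                  Real.cos_pos_of_mem_Ioo ⟨by linarith [Real.pi_pos], by linarith⟩
                have h2v : (W a (n+2) s).2 = π + 6*a*Real.cos ((W a (n+1) s).1/2) := by
                  rw [hW2]; simp only [G]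
                  rw [← hEq, Real.sin_pi_div_two]; ring
                have h2u : (W a (n+2) s).1 = (W a (n+1) s).1 := by
                  rw [hW2]; simp only [G]
                  rw [← hEq, Real.cos_pi_div_two]; ring
                apply hB
                refine ⟨n+2, by rw [h2v]; nlinarith, fun m hm' => ?_⟩
                by_cases hm2 : m ≤ n
                · exact (ih m hm2).2.1
                · have : m = n+1 ∨ m = n+2 := by omega
                  rcases this with h' | h'
                  · rw [h']; exact hU
                  · rw [h', h2u]; exact hU
              · apply hB
                refine ⟨n+1, hGt, fun m hm' => ?_⟩
                by_cases hm2 : m ≤ n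
                · exact (ih m hm2).2.1
                · have : m = n+1 := by omega
                  rw [this]; exact hU
        refine ⟨by rw [hWu]; linarith, hkey.1, by rw [hWv]; linarith, hkey.2⟩

lemma forward_limit {a : ℝ} (ha : 0 < a) (ha6 : a < 1/6) {s : ℝ}
    (hs0 : 0 < s) (hs1 : s < 1) (hA : s ∉ A a) (hB : s ∉ B a) :
    Tendsto (fun n => W a n s) atTop (nhds ((π, π) : ℝ × ℝ)) := by
  have hbnd := fun n => main_inv ha ha6 hs0 hs1 hA hB n n le_rfl
  set U : ℕ → ℝ := fun n => (W a n s).1 with hUdef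
  set V : ℕ → ℝ := fun n => (W a n s).2 with hVdef
  have hWu : ∀ n, U (n+1) = U n + 2*a*(Real.cos (V n/2) * Real.sin (U n/2)) := by
    intro n
    show (W a (n+1) s).1 = _
    rw [W_succ]; simp only [G]; rfl
  have hWv : ∀ n, V (n+1) = V n + 6*a*(Real.sin (V n/2) * Real.cos (U n/2)) := by
    intro n
    show (W a (n+1) s).2 = _
    rw [W_succ]; simp only [G]; rfl
  have hUmono : Monotone U := monotone_nat_of_le_succ (fun n => by
    have h := step_pos1 ha (hbnd n).1 (hbnd n).2.1 (hbnd n).2.2.1 (hbnd n).2.2.2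
    rw [hWu n]; linarith)
  have hVmono : Monotone V := monotone_nat_of_le_succ (fun n => by
    have h := step_pos2 ha (hbnd n).1 (hbnd n).2.1 (hbnd n).2.2.1 (hbnd n).2.2.2
    rw [hWv n]; linarith)
  have hUbdd : BddAbove (Set.range U) := by
    refine ⟨π, ?_⟩
    rintro x ⟨n, rfl⟩
    exact (hbnd n).2.1.le
  have hVbdd : BddAbove (Set.range V) := by
    refine ⟨π, ?_⟩
    rintro x ⟨n, rfl⟩
    exact (hbnd n).2.2.2.le
  set L := ⨆ n, U n with hL
  set M := ⨆ n, V n with hM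
  have hUL : Tendsto U atTop (nhds L) := tendsto_atTop_ciSup hUmono hUbdd
  have hVM : Tendsto V atTop (nhds M) := tendsto_atTop_ciSup hVmono hVbdd
  have hLpi : L ≤ π := ciSup_le (fun n => (hbnd n).2.1.le)
  have hMpi : M ≤ π := ciSup_le (fun n => (hbnd n).2.2.2.le)
  have hLpos : 0 < L := lt_of_lt_of_le (hbnd 0).1 (le_ciSup hUbdd 0)
  have hMpos : 0 < M := lt_of_lt_of_le (hbnd 0).2.2.1 (le_ciSup hVbdd 0)
  -- pass to the limit in the recurrences
  have hcosV : Tendsto (fun n => Real.cos (V n / 2)) atTop (nhds (Real.cos (M/2))) :=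
    (Real.continuous_cos.tendsto _).comp (hVM.div_const 2)
  have hsinU : Tendsto (fun n => Real.sin (U n / 2)) atTop (nhds (Real.sin (L/2))) :=
    (Real.continuous_sin.tendsto _).comp (hUL.div_const 2)
  have hsinV : Tendsto (fun n => Real.sin (V n / 2)) atTop (nhds (Real.sin (M/2))) :=
    (Real.continuous_sin.tendsto _).comp (hVM.div_const 2)
  have hcosU : Tendsto (fun n => Real.cos (U n / 2)) atTop (nhds (Real.cos (L/2))) :=
    (Real.continuous_cos.tendsto _).comp (hUL.div_const 2)
  have hshiftU : Tendsto (fun n => U (n+1)) atTop (nhds L) :=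
    hUL.comp (tendsto_add_atTop_nat 1)
  have hshiftV : Tendsto (fun n => V (n+1)) atTop (nhds M) :=
    hVM.comp (tendsto_add_atTop_nat 1)
  have hrhsU : Tendsto (fun n => U n + 2*a*(Real.cos (V n/2) * Real.sin (U n/2))) atTop
      (nhds (L + 2*a*(Real.cos (M/2) * Real.sin (L/2)))) :=
    hUL.add (tendsto_const_nhds.mul (hcosV.mul hsinU))
  have hrhsV : Tendsto (fun n => V n + 6*a*(Real.sin (V n/2) * Real.cos (U n/2))) atTop
      (nhds (M + 6*a*(Real.sin (M/2) * Real.cos (L/2)))) :=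
    hVM.add (tendsto_const_nhds.mul (hsinV.mul hcosU))
  have heqU : L = L + 2*a*(Real.cos (M/2) * Real.sin (L/2)) := by
    apply tendsto_nhds_unique hshiftU
    exact hrhsU.congr (fun n => (hWu n).symm)
  have heqV : M = M + 6*a*(Real.sin (M/2) * Real.cos (L/2)) := by
    apply tendsto_nhds_unique hshiftV
    exact hrhsV.congr (fun n => (hWv n).symm)
  have hprod1 : Real.cos (M/2) * Real.sin (L/2) = 0 := by
    have h2a : (2*a) ≠ 0 := by positivity
    have : 2*a*(Real.cos (M/2) * Real.sin (L/2)) = 0 := by linarith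
    exact (mul_eq_zero.mp this).resolve_left h2a
  have hprod2 : Real.sin (M/2) * Real.cos (L/2) = 0 := by
    have h6a : (6*a) ≠ 0 := by positivity
    have : 6*a*(Real.sin (M/2) * Real.cos (L/2)) = 0 := by linarith
    exact (mul_eq_zero.mp this).resolve_left h6a
  have hsinL : 0 < Real.sin (L/2) :=
    Real.sin_pos_of_pos_of_lt_pi (by linarith) (by linarith [Real.pi_pos])
  have hcosM : Real.cos (M/2) = 0 := by
    rcases mul_eq_zero.mp hprod1 with h | h
    · exact h
    · exact absurd h hsinL.ne'
  have hMeq : M = π := by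
    by_contra hne
    have hMlt : M < π := lt_of_le_of_ne hMpi hne
    have : 0 < Real.cos (M/2) :=
      Real.cos_pos_of_mem_Ioo ⟨by linarith [Real.pi_pos], by linarith⟩
    exact this.ne' hcosM
  have hsinM : Real.sin (M/2) = 1 := by rw [hMeq]; exact Real.sin_pi_div_two
  have hcosL : Real.cos (L/2) = 0 := by
    rcases mul_eq_zero.mp hprod2 with h | h
    · rw [hsinM] at h; norm_num at h
    · exact h
  have hLeq : L = π := by
    by_contra hne
    have hLlt : L < π := lt_of_le_of_ne hLpi hne
    have : 0 < Real.cos (L/2) :=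
      Real.cos_pos_of_mem_Ioo ⟨by linarith [Real.pi_pos], by linarith⟩
    exact this.ne' hcosL
  have : Tendsto (fun n => (U n, V n)) atTop (nhds ((L, M) : ℝ × ℝ)) :=
    hUL.prodMk_nhds hVM
  rw [hLeq, hMeq] at this
  exact this

/-! ### Backward dynamics: expansion near the origin -/

lemma xsin {x : ℝ} (h : |x| ≤ 1) : (3/4) * x^2 ≤ x * Real.sin x := by
  rcases lt_trichotomy x 0 with hx | hx | hx
  · have hx' : 0 < -x := by linarith
    have h1 : -x ≤ 1 := by rw [abs_of_neg hx] at h; linarith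
    have hs := Real.sin_gt_sub_cube hx'
    rw [Real.sin_neg] at hs
    have hx2 : x^2 ≤ 1 := by nlinarith
    nlinarith [mul_lt_mul_of_pos_left hs hx', mul_nonneg (by nlinarith : (0:ℝ) ≤ 1 - x^2) (sq_nonneg x)]
  · simp [hx]
  · have h1 : x ≤ 1 := by rw [abs_of_pos hx] at h; linarith
    have hs := Real.sin_gt_sub_cube hx
    have hx2 : x^2 ≤ 1 := by nlinarith
    nlinarith [mul_lt_mul_of_pos_left hs hx, mul_nonneg (by nlinarith : (0:ℝ) ≤ 1 - x^2) (sq_nonneg x)]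

lemma sin_sq_le {x : ℝ} : (Real.sin x)^2 ≤ x^2 := by
  have h := Real.abs_sin_le_abs (x := x)
  calc (Real.sin x)^2 = |Real.sin x|^2 := (sq_abs _).symm
    _ ≤ |x|^2 := by nlinarith [abs_nonneg (Real.sin x), abs_nonneg x]
    _ = x^2 := sq_abs _

lemma expand {a : ℝ} (ha : 0 < a) {x y : ℝ} (hx : |x| ≤ 1) (hy : |y| ≤ 1) :
    (1+a) * (x^2 + y^2) ≤
      (x + 2*a*Real.sin x + a*Real.sin y)^2 + (y + a*Real.sin x + 2*a*Real.sin y)^2 := by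
  set sx := Real.sin x with hsx
  set sy := Real.sin y with hsy
  have h1 : (3/4)*x^2 ≤ x * sx := xsin hx
  have h2 : (3/4)*y^2 ≤ y * sy := xsin hy
  have h3 : sx^2 ≤ x^2 := sin_sq_le
  have h4 : sy^2 ≤ y^2 := sin_sq_le
  have E : x^2 + y^2 ≤ 2*(2*(x*sx) + x*sy + y*sx + 2*(y*sy)) := by
    nlinarith [sq_nonneg (x + sy), sq_nonneg (y + sx)]
  nlinarith [mul_le_mul_of_nonneg_left E ha.le, mul_nonneg (mul_pos ha ha).le (sq_nonneg (2*sx + sy)),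
    mul_nonneg (mul_pos ha ha).le (sq_nonneg (sx + 2*sy))]

lemma exists_pre {a : ℝ} (ha : 0 < a) (ha6 : a < 1/6) (q : ℝ × ℝ) :
    ∃ p, F a p = q ∧ (q.1^2 + q.2^2 ≤ 1/16 → p.1^2 + p.2^2 ≤ (q.1^2 + q.2^2)/(1+a)) := by
  set T : ℝ × ℝ → ℝ × ℝ := fun p =>
    (q.1 - 2*a*Real.sin p.1 - a*Real.sin p.2, q.2 - a*Real.sin p.1 - 2*a*Real.sin p.2) with hT
  have hlip : LipschitzWith (1/2 : NNReal) T := by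
    apply LipschitzWith.of_dist_le_mul
    intro p p'
    have hcast : ((1/2 : NNReal) : ℝ) = 1/2 := by norm_num
    rw [hcast]
    have l1 := sin_lip p.1 p'.1
    have l2 := sin_lip p.2 p'.2
    have hd1 : |p.1 - p'.1| ≤ dist p p' := by
      rw [Prod.dist_eq, ← Real.dist_eq]; exact le_max_left _ _
    have hd2 : |p.2 - p'.2| ≤ dist p p' := by
      rw [Prod.dist_eq, ← Real.dist_eq]; exact le_max_right _ _
    have hl1 : |Real.sin p.1 - Real.sin p'.1| ≤ dist p p' := le_trans l1 hd1
    have hl2 : |Real.sin p.2 - Real.sin p'.2| ≤ dist p p' := le_trans l2 hd2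
    have ha1 := abs_le.mp hl1
    have ha2 := abs_le.mp hl2
    rw [Prod.dist_eq]
    apply max_le
    · rw [Real.dist_eq]
      have he : (T p).1 - (T p').1
          = -(2*a*(Real.sin p.1 - Real.sin p'.1)) - a*(Real.sin p.2 - Real.sin p'.2) := by
        simp only [hT]; ring
      rw [he, abs_le]
      constructor <;> nlinarith
    · rw [Real.dist_eq]
      have he : (T p).2 - (T p').2
          = -(a*(Real.sin p.1 - Real.sin p'.1)) - 2*a*(Real.sin p.2 - Real.sin p'.2) := by
        simp only [hT]; ring
      rw [he, abs_le]
      constructor <;> nlinarith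
  have hcontr : ContractingWith (1/2) T := ⟨by rw [← NNReal.coe_lt_coe]; norm_num, hlip⟩
  obtain ⟨p, hfix, -⟩ := hcontr.exists_fixedPoint ((0,0) : ℝ × ℝ) (edist_ne_top _ _)
  have h1 : (T p).1 = p.1 := congrArg Prod.fst hfix
  have h2 : (T p).2 = p.2 := congrArg Prod.snd hfix
  simp only [hT] at h1 h2
  have hFq : F a p = q := by
    have : F a p = (p.1 + 2*a*Real.sin p.1 + a*Real.sin p.2,
      p.2 + a*Real.sin p.1 + 2*a*Real.sin p.2) := rfl
    rw [this, Prod.ext_iff]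
    constructor
    · show p.1 + 2*a*Real.sin p.1 + a*Real.sin p.2 = q.1; linarith
    · show p.2 + a*Real.sin p.1 + 2*a*Real.sin p.2 = q.2; linarith
  refine ⟨p, hFq, fun hq => ?_⟩
  have hq1 : |q.1| ≤ 1/4 := by
    rw [abs_le]
    constructor <;> nlinarith [sq_nonneg q.2]
  have hq2 : |q.2| ≤ 1/4 := by
    rw [abs_le]
    constructor <;> nlinarith [sq_nonneg q.1]
  have hb1 := abs_le.mp hq1
  have hb2 := abs_le.mp hq2
  have hs1 := Real.sin_le_one p.1
  have hs1' := Real.neg_one_le_sin p.1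
  have hs2 := Real.sin_le_one p.2
  have hs2' := Real.neg_one_le_sin p.2
  have hp1 : |p.1| ≤ 1 := by rw [abs_le]; constructor <;> nlinarith
  have hp2 : |p.2| ≤ 1 := by rw [abs_le]; constructor <;> nlinarith
  have hexp := expand ha hp1 hp2
  have hq1' : q.1 = p.1 + 2*a*Real.sin p.1 + a*Real.sin p.2 := by
    rw [← hFq]; rfl
  have hq2' : q.2 = p.2 + a*Real.sin p.1 + 2*a*Real.sin p.2 := by
    rw [← hFq]; rfl
  rw [le_div_iff₀ (by linarith : (0:ℝ) < 1+a)]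
  rw [hq1', hq2']
  linarith [hexp]

end Het

theorem stmt_17 (a : ℝ) (ha : 0 < a) (ha' : a < 1/6) :
    ∃ X : ℤ → ℝ × ℝ,
      (∀ n : ℤ, X (n + 1) = F a (X n)) ∧
      (∀ n : ℤ, X n ≠ ((0, 0) : ℝ × ℝ) ∧ X n ≠ ((Real.pi, 0) : ℝ × ℝ)) ∧
      Filter.Tendsto X Filter.atTop (nhds ((Real.pi, 0) : ℝ × ℝ)) ∧
      Filter.Tendsto X Filter.atBot (nhds ((0, 0) : ℝ × ℝ)) := by
  classical
  -- obtain the shooting parameter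
  obtain ⟨s, hsI, hsA, hsB⟩ : ∃ s ∈ Set.Icc (0:ℝ) 1, s ∉ Het.A a ∧ s ∉ Het.B a := by
    by_contra hcon
    push_neg at hcon
    have hsub : Set.Icc (0:ℝ) 1 ⊆ Het.A a ∪ Het.B a := by
      intro x hx
      rcases Classical.em (x ∈ Het.A a) with h | h
      · exact Or.inl h
      · exact Or.inr (hcon x hx h)
    obtain ⟨x, hx⟩ := isPreconnected_Icc (a := (0:ℝ)) (b := 1) (Het.A a) (Het.B a)
      (Het.isOpen_A a) (Het.isOpen_B a) hsub
      ⟨0, Set.left_mem_Icc.mpr (by norm_num), Het.zero_mem_A ha⟩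
      ⟨1, Set.right_mem_Icc.mpr (by norm_num), Het.one_mem_B ha⟩
    exact Het.disjoint_AB a x hx.2.1 hx.2.2
  have hs0 : 0 < s := hsI.1.lt_of_ne (fun h => hsA (h ▸ Het.zero_mem_A ha))
  have hs1 : s < 1 := hsI.2.lt_of_ne' (fun h => hsB (h ▸ Het.one_mem_B ha))
  have hbnd := fun n => Het.main_inv ha ha' hs0 hs1 hsA hsB n n le_rfl
  set p₀ : ℝ × ℝ := Het.toXY (Het.P s) with hp₀
  have e1 : p₀.1 = 1/8 := by simp only [hp₀, Het.toXY, Het.P]; ring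
  have e2 : p₀.2 = (2*s - 1)/8 := by simp only [hp₀, Het.toXY, Het.P]; ring
  -- forward orbit
  have hfwd : ∀ k : ℕ, (F a)^[k] p₀ = Het.toXY (Het.W a k s) := by
    intro k
    induction k with
    | zero => rfl
    | succ k ih => rw [Function.iterate_succ_apply', ih, Het.conj, ← Het.W_succ]
  -- backward orbit
  choose pre hpre1 hpre2 using Het.exists_pre ha ha'
  set Bwd : ℕ → ℝ × ℝ := fun k => pre^[k] p₀ with hBwdDef
  have hBsucc : ∀ k, Bwd (k+1) = pre (Bwd k) := fun k => Function.iterate_succ_apply' pre k p₀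
  have hFB : ∀ k, F a (Bwd (k+1)) = Bwd k := fun k => by rw [hBsucc]; exact hpre1 (Bwd k)
  have hp₀N : p₀.1^2 + p₀.2^2 ≤ 1/32 := by
    rw [e1, e2]; nlinarith
  have hBN : ∀ k, (Bwd k).1^2 + (Bwd k).2^2 ≤ 1/32 / (1+a)^k := by
    intro k
    induction k with
    | zero => simpa [hBwdDef] using hp₀N
    | succ k ih =>
        have hpk : (1:ℝ) ≤ (1+a)^k := one_le_pow₀ (by linarith)
        have hk16 : (Bwd k).1^2 + (Bwd k).2^2 ≤ 1/16 := by
          have h1 : (1:ℝ)/32 / (1+a)^k ≤ 1/32 := div_le_self (by norm_num) hpk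
          linarith
        have hstep := hpre2 (Bwd k) hk16
        rw [hBsucc]
        calc (pre (Bwd k)).1^2 + (pre (Bwd k)).2^2
            ≤ ((Bwd k).1^2 + (Bwd k).2^2) / (1+a) := hstep
          _ ≤ (1/32 / (1+a)^k) / (1+a) := by
              exact (div_le_div_iff_of_pos_right (by linarith)).mpr ih
          _ = 1/32 / (1+a)^(k+1) := by
              rw [div_div, pow_succ]
  have hB0 : ∀ k, Bwd k ≠ ((0,0) : ℝ × ℝ) := by
    intro k
    induction k with
    | zero =>
        intro h
        have : p₀.1 = 0 := by rw [show p₀ = Bwd 0 from rfl, h]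
        rw [e1] at this; norm_num at this
    | succ k ih =>
        intro h
        apply ih
        have hF0 : F a ((0,0) : ℝ × ℝ) = (0,0) := by simp [F]
        have := hFB k
        rw [h, hF0] at this
        exact this.symm
  set X : ℤ → ℝ × ℝ := fun n => if 0 ≤ n then (F a)^[n.toNat] p₀ else Bwd (-n).toNat with hX
  refine ⟨X, ?_, ?_, ?_, ?_⟩
  · -- recurrence
    intro n
    by_cases hn : 0 ≤ n
    · have hn1 : 0 ≤ n + 1 := by omega
      simp only [hX, if_pos hn, if_pos hn1]
      have ht : (n+1).toNat = n.toNat + 1 := by omega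
      rw [ht, Function.iterate_succ_apply']
    · by_cases hn1 : n + 1 = 0
      · simp only [hX, if_neg hn, if_pos (by omega : (0:ℤ) ≤ n+1)]
        have h1 : (n+1).toNat = 0 := by omega
        have h2 : (-n).toNat = 1 := by omega
        rw [h1, h2]
        exact (hFB 0).symm
      · have h1 : ¬ (0:ℤ) ≤ n + 1 := by omega
        simp only [hX, if_neg hn, if_neg h1]
        have h2 : (-n).toNat = (-(n+1)).toNat + 1 := by omega
        rw [h2]
        exact (hFB _).symm
  · -- avoids the fixed points
    intro n
    by_cases hn : 0 ≤ n
    · simp only [hX, if_pos hn]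
      rw [hfwd]
      obtain ⟨h1, h2, h3, h4⟩ := hbnd n.toNat
      constructor
      · intro h
        rw [Prod.ext_iff] at h
        simp only [Het.toXY] at h
        obtain ⟨f1, f2⟩ := h
        linarith [f1, f2]
      · intro h
        rw [Prod.ext_iff] at h
        simp only [Het.toXY] at h
        obtain ⟨f1, f2⟩ := h
        linarith [f1, f2]
    · simp only [hX, if_neg hn]
      refine ⟨hB0 _, ?_⟩
      intro h
      have hbn := hBN (-n).toNat
      rw [h] at hbn
      simp only at hbn
      have hpk : (1:ℝ) ≤ (1+a)^(-n).toNat := one_le_pow₀ (by linarith)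
      have hd : (1:ℝ)/32 / (1+a)^(-n).toNat ≤ 1/32 := div_le_self (by norm_num) hpk
      nlinarith [Real.pi_gt_three]
  · -- forward convergence
    have hlim := Het.forward_limit ha ha' hs0 hs1 hsA hsB
    have hc : Continuous Het.toXY := by unfold Het.toXY; fun_prop
    have hall : Filter.Tendsto (fun k : ℕ => Het.toXY (Het.W a k s)) Filter.atTop
        (nhds ((Real.pi, 0) : ℝ × ℝ)) := by
      have h := (hc.tendsto ((Real.pi, Real.pi) : ℝ × ℝ)).comp hlim
      have he : Het.toXY ((Real.pi, Real.pi) : ℝ × ℝ) = ((Real.pi, 0) : ℝ × ℝ) := by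
        simp only [Het.toXY]
        rw [Prod.ext_iff]
        constructor <;> simp <;> ring
      rwa [he] at h
    have htoNat : Filter.Tendsto (fun n : ℤ => n.toNat) Filter.atTop Filter.atTop := by
      apply Filter.tendsto_atTop_atTop.mpr
      intro b
      exact ⟨(b : ℤ), fun n hn => by omega⟩
    have h1 := hall.comp htoNat
    refine Filter.Tendsto.congr' ?_ h1
    filter_upwards [Filter.eventually_ge_atTop (0:ℤ)] with n hn
    simp only [Function.comp, hX, if_pos hn]
    rw [hfwd]
  · -- backward convergence
    have hr0 : (0:ℝ) ≤ 1/(1+a) := by positivity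
    have hr1 : 1/(1+a) < 1 := by
      rw [div_lt_one (by linarith)]; linarith
    have hgeo : Filter.Tendsto (fun k : ℕ => (1/32) * (1/(1+a))^k) Filter.atTop (nhds 0) := by
      have h := tendsto_pow_atTop_nhds_zero_of_lt_one hr0 hr1
      simpa using h.const_mul (1/32 : ℝ)
    have hNB : Filter.Tendsto (fun k : ℕ => (Bwd k).1^2 + (Bwd k).2^2) Filter.atTop (nhds 0) := by
      apply squeeze_zero (fun k => by positivity) (fun k => ?_) hgeo
      have h := hBN k
      have he : (1:ℝ)/32 / (1+a)^k = 1/32 * (1/(1+a))^k := by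
        rw [div_pow, one_pow, mul_one_div]
      rw [he] at h
      exact h
    have hcoord : ∀ (f : ℝ × ℝ → ℝ), (∀ p : ℝ × ℝ, f p ^ 2 ≤ p.1^2 + p.2^2) →
        Filter.Tendsto (fun k : ℕ => f (Bwd k)) Filter.atTop (nhds 0) := by
      intro f hf
      have hsq : Filter.Tendsto (fun k : ℕ => f (Bwd k) ^ 2) Filter.atTop (nhds 0) :=
        squeeze_zero (fun k => sq_nonneg _) (fun k => hf (Bwd k)) hNB
      have habs : Filter.Tendsto (fun k : ℕ => |f (Bwd k)|) Filter.atTop (nhds 0) := by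
        have h := hsq.sqrt
        simpa [Real.sqrt_sq_eq_abs] using h
      exact (tendsto_zero_iff_abs_tendsto_zero _).mpr habs
    have hc1 := hcoord (fun p => p.1) (fun p => by nlinarith [sq_nonneg p.2])
    have hc2 := hcoord (fun p => p.2) (fun p => by nlinarith [sq_nonneg p.1])
    have hBlim : Filter.Tendsto Bwd Filter.atTop (nhds ((0,0) : ℝ × ℝ)) := by
      have h := hc1.prodMk_nhds hc2
      exact h
    have hneg : Filter.Tendsto (fun n : ℤ => (-n).toNat) Filter.atBot Filter.atTop := by
      apply Filter.tendsto_atBot_atTop.mpr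
      intro b
      exact ⟨-(b:ℤ), fun n hn => by omega⟩
    have h1 := hBlim.comp hneg
    refine Filter.Tendsto.congr' ?_ h1
    filter_upwards [Filter.eventually_le_atBot (-1 : ℤ)] with n hn
    simp only [Function.comp, hX, if_neg (by omega : ¬ (0:ℤ) ≤ n)]
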